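/- Let m be Lebesgue measure on [0,1], let δ be the Dirac measure at the point 0 of [0,1], and let μ = (1/2)δ + (1/2)m. Then { ∫₀¹ u dμ : u ∈ C([0,1], ℂ) with |u(x)| = 1 for all x ∈ [0,1] } = { λ ∈ ℂ : 0 < |λ| ≤ 1 }. In particular, there is no continuous function u : [0,1] → 𝕋 with ∫₀¹ u dμ = 0. -/

import Mathlib

open MeasureTheory
open scoped ENNReal

open Real in
noncomputable def ee (x : ℝ) : ℂ := Complex.exp (2 * π * x * Complex.I)

open Real Complex in
lemma ee_abs (x : ℝ) : ‖ee x‖ = 1 := by simp [ee, Complex.norm_exp]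

lemma ee_ne (x : ℝ) : ee x ≠ 0 := Complex.exp_ne_zero _

lemma ee_cont : Continuous ee := Complex.continuous_exp.comp (by continuity)

lemma ee_zero : ee 0 = 1 := by simp [ee]

lemma ee_one : ee 1 = 1 := by
  simp only [ee, Complex.ofReal_one, mul_one]; exact Complex.exp_two_pi_mul_I

open Real in
lemma ee_deriv (x : ℝ) : HasDerivAt ee (2 * π * Complex.I * ee x) x := by
  have h := (((hasDerivAt_id ((x:ℝ):ℂ)).const_mul
      (2 * (π:ℂ))).mul_const Complex.I).cexp.comp_ofReal
  convert h using 1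
  · funext y; simp only [id_eq, ee]
  · simp only [id_eq, ee]; ring

lemma denom_ne {t : ℝ} (ht : |t| < 1) (x : ℝ) : (1 : ℂ) + t * ee x ≠ 0 := by
  intro h
  have habs : ‖(t:ℂ) * ee x‖ = |t| := by
    simp [ee_abs]
  have h1 : (t:ℂ) * ee x = -1 := by linear_combination h
  rw [h1] at habs; simp at habs; linarith

open Real in
lemma denom_slit {t : ℝ} (ht : |t| < 1) (x : ℝ) :
    (1 : ℂ) + t * ee x ∈ Complex.slitPlane := by
  refine Complex.mem_slitPlane_iff.2 (Or.inl ?_)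
  have h1 : ((1 : ℂ) + t * ee x).re = 1 + t * (ee x).re := by simp
  rw [h1]
  have h2 : |(ee x).re| ≤ 1 := by
    have := Complex.abs_re_le_norm (ee x); rw [ee_abs] at this; exact this
  have h3 : |t * (ee x).re| ≤ |t| := by
    rw [abs_mul]; nlinarith [abs_nonneg t]
  nlinarith [neg_abs_le (t * (ee x).re)]

lemma ee_conj (x : ℝ) : (starRingEnd ℂ) (ee x) = (ee x)⁻¹ := by
  rw [ee, ← Complex.exp_conj, ← Complex.exp_neg]
  congr 1
  simp [Complex.ext_iff]

lemma blaschke_abs {t : ℝ} (ht : |t| < 1) (x : ℝ) :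
    ‖(ee x + t) / (1 + t * ee x)‖ = 1 := by
  have hinv := mul_inv_cancel₀ (ee_ne x)
  have key : ee x + (t:ℂ) = (starRingEnd ℂ) (1 + t * ee x) * ee x := by
    simp only [map_add, map_mul, map_one, Complex.conj_ofReal, ee_conj]
    linear_combination (-(t:ℂ)) * hinv
  rw [norm_div, key, norm_mul, Complex.norm_conj, ee_abs, mul_one,
    div_self (norm_ne_zero_iff.mpr (denom_ne ht x))]

open Real in
lemma key_integral {t : ℝ} (ht : |t| < 1) :
    ∫ x in (0:ℝ)..1, (ee x + t) / (1 + t * ee x) = t := by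
  have hcont : Continuous (fun x => (ee x + (t:ℂ)) / (1 + t * ee x)) := by
    apply Continuous.div
    · exact ee_cont.add continuous_const
    · exact continuous_const.add (continuous_const.mul ee_cont)
    · exact fun x => denom_ne ht x
  have hπ : (π:ℂ) ≠ 0 := by exact_mod_cast Real.pi_ne_zero
  by_cases ht0 : t = 0
  · subst ht0
    rw [intervalIntegral.integral_eq_sub_of_hasDerivAt
      (f := fun x : ℝ => ee x / (2 * π * Complex.I))
      (fun x _ => ?_) (hcont.intervalIntegrable 0 1)]
    · simp [ee_one, ee_zero]
    · have h := (ee_deriv x).div_const (2 * π * Complex.I)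
      convert h using 1
      · rfl
      push_cast
      field_simp
      ring
  · rw [intervalIntegral.integral_eq_sub_of_hasDerivAt
      (f := fun x : ℝ => t * x + ((1 - t^2) / (2 * π * Complex.I * t)) * Complex.log (1 + t * ee x))
      (fun x _ => ?_) (hcont.intervalIntegrable 0 1)]
    · simp [ee_one, ee_zero]
    · have hw : HasDerivAt (fun x : ℝ => (1:ℂ) + t * ee x) ((t:ℂ) * (2 * π * Complex.I * ee x)) x :=
        ((ee_deriv x).const_mul (t:ℂ)).const_add 1
      have hlog := hw.clog_real (denom_slit ht x)
      have hx : HasDerivAt (fun x : ℝ => ((t:ℝ):ℂ) * x) (t:ℂ) x := by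
        simpa using (Complex.ofRealCLM.hasDerivAt (x := x)).const_mul ((t:ℝ):ℂ)
      have h := hx.add (hlog.const_mul ((1 - (t:ℂ)^2) / (2 * π * Complex.I * t)))
      convert h using 1
      · rfl
      have htC : ((t:ℝ):ℂ) ≠ 0 := by exact_mod_cast ht0
      have h1 : ((1:ℂ) + t * ee x) * ((1:ℂ) + t * ee x)⁻¹ = 1 :=
        mul_inv_cancel₀ (denom_ne ht x)
      have hq : (2 * (π:ℂ) * Complex.I * t) ≠ 0 := by
        simp [Complex.I_ne_zero, hπ, Complex.ofReal_ne_zero.2 ht0]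
      have h2 : (2 * (π:ℂ) * Complex.I * t) * (2 * (π:ℂ) * Complex.I * t)⁻¹ = 1 :=
        mul_inv_cancel₀ hq
      linear_combination (t:ℂ) * h1 - (1 - (t:ℂ)^2) * ee x * ((1:ℂ) + (t:ℂ) * ee x)⁻¹ * h2

lemma integral_split (μ : Measure (Set.Icc (0 : ℝ) 1)) (p : Set.Icc (0 : ℝ) 1)
    (hμ : μ = (1 / 2 : ℝ≥0∞) • Measure.dirac p + (1 / 2 : ℝ≥0∞) • volume)
    (u : C(Set.Icc (0 : ℝ) 1, ℂ)) :
    ∫ x, u x ∂μ = (1 / 2 : ℂ) * u p + (1 / 2 : ℂ) * ∫ x, u x := by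
  subst hμ
  have hd : Integrable (fun x => u x) (Measure.dirac p) :=
    u.continuous.integrable_of_hasCompactSupport (HasCompactSupport.of_compactSpace _)
  have hv : Integrable (fun x => u x) (volume : Measure (Set.Icc (0:ℝ) 1)) :=
    u.continuous.integrable_of_hasCompactSupport (HasCompactSupport.of_compactSpace _)
  rw [integral_add_measure (hd.smul_measure (by norm_num)) (hv.smul_measure (by norm_num)),
    integral_smul_measure, integral_smul_measure, integral_dirac]
  norm_num [Complex.real_smul]

lemma vol_univ : (volume : Measure (Set.Icc (0:ℝ) 1)) Set.univ = 1 := by simp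

lemma int_norm_le (u : C(Set.Icc (0 : ℝ) 1, ℂ)) (hn : ∀ x, ‖u x‖ = 1) :
    ‖∫ x, u x‖ ≤ 1 := by
  calc ‖∫ x, u x ∂(volume : Measure (Set.Icc (0:ℝ) 1))‖
      ≤ ∫ x, ‖u x‖ := norm_integral_le_integral_norm _
    _ = 1 := by simp [hn]

lemma no_zero (u : C(Set.Icc (0 : ℝ) 1, ℂ)) (hn : ∀ x, ‖u x‖ = 1)
    (h : (1 / 2 : ℂ) * u ⟨0, by norm_num⟩ + (1 / 2 : ℂ) * ∫ x, u x = 0) : False := by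
  set p : Set.Icc (0:ℝ) 1 := ⟨0, by norm_num⟩ with hp
  set c : ℂ := u p with hc
  have hv : Integrable (fun x => u x) (volume : Measure (Set.Icc (0:ℝ) 1)) :=
    u.continuous.integrable_of_hasCompactSupport (HasCompactSupport.of_compactSpace _)
  have hI : ∫ x, u x = -c := by linear_combination 2 * h
  have habs1 : ∀ w, ‖(starRingEnd ℂ) c * u w‖ = 1 := by
    intro w
    rw [norm_mul, Complex.norm_conj, hn, hn, mul_one]
  have hcc : c * (starRingEnd ℂ) c = 1 := by
    rw [Complex.mul_conj]
    have : ‖c‖ = 1 := by rw [hc, hn]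
    rw [Complex.normSq_eq_norm_sq, this]
    norm_num
  set g : ℝ → ℝ := fun y => 1 + ((starRingEnd ℂ) c * u (Set.projIcc 0 1 zero_le_one y)).re with hg
  have hgc : Continuous g := by
    apply continuous_const.add
    exact Complex.continuous_re.comp
      (continuous_const.mul (u.continuous.comp continuous_projIcc))
  have hg0 : ∀ y, 0 ≤ g y := by
    intro y
    have h1 : |((starRingEnd ℂ) c * u (Set.projIcc 0 1 zero_le_one y)).re| ≤ 1 :=
      le_of_le_of_eq (Complex.abs_re_le_norm _) (habs1 (Set.projIcc 0 1 zero_le_one y))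
    have := neg_abs_le (((starRingEnd ℂ) c * u (Set.projIcc 0 1 zero_le_one y)).re)
    simp only [hg]
    linarith
  have hgval : ∀ x : Set.Icc (0:ℝ) 1, g ↑x = 1 + ((starRingEnd ℂ) c * u x).re := by
    intro x; simp only [hg, Set.projIcc_val]
  have hcc' : (starRingEnd ℂ) c * c = 1 := by rw [mul_comm]; exact hcc
  have hg02 : g 0 = 2 := by
    have h0 : g 0 = g ↑p := by norm_num [hp]
    rw [h0, hgval p, ← hc, hcc']
    norm_num
  -- value of the integral of g over Icc 0 1
  have hre : ((starRingEnd ℂ) c * ∫ x, u x).re = -1 := by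
    rw [hI]
    have : (starRingEnd ℂ) c * -c = -1 := by
      rw [mul_neg, hcc']
    rw [this]
    norm_num
  have hginteg : ∫ x in Set.Icc (0:ℝ) 1, g x = 0 := by
    rw [← MeasureTheory.integral_subtype measurableSet_Icc g]
    have e1 : ∫ x : Set.Icc (0:ℝ) 1, g ↑x
        = ∫ x : Set.Icc (0:ℝ) 1, (1 + ((starRingEnd ℂ) c * u x).re) := by
      exact integral_congr_ae (Filter.Eventually.of_forall fun x => hgval x)
    have hw : Integrable (fun x : Set.Icc (0:ℝ) 1 => (starRingEnd ℂ) c * u x) volume :=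
      hv.const_mul _
    have hwre : Integrable (fun x : Set.Icc (0:ℝ) 1 => ((starRingEnd ℂ) c * u x).re) volume :=
      hw.re
    have e2 : ∫ x : Set.Icc (0:ℝ) 1, ((starRingEnd ℂ) c * u x).re
        = ((starRingEnd ℂ) c * ∫ x, u x).re := by
      rw [← integral_const_mul]
      exact integral_re hw
    rw [e1, integral_add (integrable_const 1) hwre, integral_const, e2, hre]
    simp
  -- positivity of the integral: contradiction
  obtain ⟨δ, hδ0, hδ⟩ := Metric.continuousAt_iff.1 hgc.continuousAt 1 one_pos
  set d : ℝ := min (δ/2) 1 with hd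
  have hd0 : 0 < d := by positivity
  have hd1 : d ≤ 1 := min_le_right _ _
  have hglb : ∀ y ∈ Set.Icc (0:ℝ) d, 1 ≤ g y := by
    intro y hy
    have hyd : dist y 0 < δ := by
      rw [Real.dist_eq, sub_zero, abs_of_nonneg hy.1]
      have := hy.2
      have : d < δ := by
        calc d ≤ δ/2 := min_le_left _ _
        _ < δ := by linarith
      linarith [hy.2]
    have := hδ hyd
    rw [Real.dist_eq, hg02] at this
    have := abs_lt.1 this
    linarith [this.1]
  have hIOn : IntegrableOn g (Set.Icc (0:ℝ) 1) := hgc.integrableOn_Icc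
  have hmono : ∫ x in Set.Icc (0:ℝ) d, g x ≤ ∫ x in Set.Icc (0:ℝ) 1, g x := by
    apply setIntegral_mono_set hIOn
    · exact Filter.Eventually.of_forall fun y => hg0 y
    · exact (Set.Icc_subset_Icc_right hd1).eventuallyLE
  have hlow : 1 * ((volume (Set.Icc (0:ℝ) d)).toReal) ≤ ∫ x in Set.Icc (0:ℝ) d, g x :=
    by simpa [measureReal_def] using (setIntegral_ge_of_const_le (μ := volume) measurableSet_Icc measure_Icc_lt_top.ne hglb
      (hIOn.mono_set (Set.Icc_subset_Icc_right hd1)))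
  have hvol : (volume (Set.Icc (0:ℝ) d)).toReal = d := by
    rw [Real.volume_Icc, ENNReal.toReal_ofReal (by linarith)]
    ring
  rw [hvol, one_mul] at hlow
  rw [hginteg] at hmono
  linarith

lemma subtype_blaschke_integral {t : ℝ} (ht : |t| < 1) :
    ∫ x : Set.Icc (0:ℝ) 1, (ee ↑x + (t:ℂ)) / (1 + t * ee ↑x) = t := by
  rw [MeasureTheory.integral_subtype measurableSet_Icc
    (fun y : ℝ => (ee y + (t:ℂ)) / (1 + t * ee y)),
    MeasureTheory.integral_Icc_eq_integral_Ioc,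
    ← intervalIntegral.integral_of_le (by norm_num : (0:ℝ) ≤ 1)]
  exact key_integral ht

lemma exists_u (z : ℂ) (hz0 : 0 < ‖z‖) (hz1 : ‖z‖ ≤ 1) :
    ∃ u : C(Set.Icc (0 : ℝ) 1, ℂ), (∀ x, ‖u x‖ = 1) ∧
      (1 / 2 : ℂ) * u ⟨0, by norm_num⟩ + (1 / 2 : ℂ) * ∫ x, u x = z := by
  set r : ℝ := ‖z‖ with hr
  rcases eq_or_lt_of_le hz1 with hr1 | hr1
  · -- r = 1 : constant function
    refine ⟨ContinuousMap.const _ z, fun x => by simp only [ContinuousMap.const_apply, ← hr, hr1], ?_⟩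
    have : ∫ _ : Set.Icc (0:ℝ) 1, z = z := by
      rw [integral_const, measureReal_def, vol_univ]
      simp
    simp only [ContinuousMap.const_apply, this]
    ring
  · -- r < 1 : Blaschke factor
    set t : ℝ := 2 * r - 1 with htdef
    have ht : |t| < 1 := by
      rw [abs_lt]; constructor <;> [skip; skip] <;> simp only [htdef] <;> linarith
    have hrC : (r:ℂ) ≠ 0 := by
      exact_mod_cast ne_of_gt hz0
    set c : ℂ := z / (r:ℂ) with hcdef
    have hcont : Continuous (fun x : Set.Icc (0:ℝ) 1 => c * ((ee ↑x + (t:ℂ)) / (1 + t * ee ↑x))) := by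
      apply continuous_const.mul
      apply Continuous.div
      · exact (ee_cont.comp continuous_subtype_val).add continuous_const
      · exact continuous_const.add (continuous_const.mul (ee_cont.comp continuous_subtype_val))
      · exact fun x => denom_ne ht ↑x
    have hcabs : ‖c‖ = 1 := by
      rw [hcdef, norm_div, Complex.norm_real, Real.norm_eq_abs, ← hr, abs_of_pos hz0, div_self (ne_of_gt hz0)]
    refine ⟨⟨fun x => c * ((ee ↑x + (t:ℂ)) / (1 + t * ee ↑x)), hcont⟩, fun x => ?_, ?_⟩
    · show ‖c * _‖ = 1
      rw [norm_mul, hcabs, blaschke_abs ht, one_mul]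
    · show (1/2 : ℂ) * (c * ((ee (0:ℝ) + (t:ℂ)) / (1 + t * ee (0:ℝ))))
        + (1/2 : ℂ) * (∫ x : Set.Icc (0:ℝ) 1, c * ((ee ↑x + (t:ℂ)) / (1 + t * ee ↑x))) = z
      rw [integral_const_mul, subtype_blaschke_integral ht, ee_zero]
      have h1t : (1:ℂ) + (t:ℂ) ≠ 0 := by
        have : ((1 + t : ℝ) : ℂ) ≠ 0 := by
          rw [Complex.ofReal_ne_zero]
          simp only [htdef]; linarith
        push_cast at this
        convert this using 2
      have htc : ((t:ℝ):ℂ) = 2 * (r:ℂ) - 1 := by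
        rw [htdef]; push_cast; ring
      rw [hcdef, htc]
      field_simp
      ring

/-- For the measure `μ = ½δ₀ + ½m` on `[0,1]` (Dirac at `0` plus Lebesgue), the set of
integrals `∫ u dμ` of unimodular continuous functions `u : [0,1] → ℂ` is exactly the
punctured closed unit disc `{λ : 0 < |λ| ≤ 1}`; in particular there is no continuous
`u : [0,1] → 𝕋` with `∫ u dμ = 0`. -/
theorem integrals_of_unitaries_eq_punctured_disc :
    ∀ μ : Measure (Set.Icc (0 : ℝ) 1),
      μ = (1 / 2 : ℝ≥0∞) • Measure.dirac (⟨0, by norm_num⟩ : Set.Icc (0 : ℝ) 1)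
            + (1 / 2 : ℝ≥0∞) • volume →
      ({z : ℂ | ∃ u : C(Set.Icc (0 : ℝ) 1, ℂ),
          (∀ x, ‖u x‖ = 1) ∧ ∫ x, u x ∂μ = z}
        = {z : ℂ | 0 < ‖z‖ ∧ ‖z‖ ≤ 1}) ∧
      ¬ ∃ u : C(Set.Icc (0 : ℝ) 1, ℂ),
          (∀ x, ‖u x‖ = 1) ∧ ∫ x, u x ∂μ = 0 := by
  intro μ hμ
  have key : ∀ z : ℂ, (∃ u : C(Set.Icc (0:ℝ) 1, ℂ), (∀ x, ‖u x‖ = 1) ∧ ∫ x, u x ∂μ = z)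
      ↔ 0 < ‖z‖ ∧ ‖z‖ ≤ 1 := by
    intro z
    constructor
    · rintro ⟨u, hn, hint⟩
      rw [integral_split μ _ hμ u] at hint
      constructor
      · refine norm_pos_iff.mpr fun h0 => ?_
        exact no_zero u hn (by rw [hint, h0])
      · rw [← hint]
        have h1 : ‖u (⟨0, by norm_num⟩ : Set.Icc (0:ℝ) 1)‖ = 1 := hn _
        have h2 := int_norm_le u hn
        calc ‖(1/2 : ℂ) * u ⟨0, by norm_num⟩ + (1/2 : ℂ) * ∫ x, u x‖
            ≤ ‖(1/2 : ℂ) * u ⟨0, by norm_num⟩‖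
              + ‖(1/2 : ℂ) * ∫ x, u x‖ := norm_add_le _ _
          _ = (1/2) * ‖u (⟨0, by norm_num⟩ : Set.Icc (0:ℝ) 1)‖
              + (1/2) * ‖∫ x, u x‖ := by
                rw [norm_mul, norm_mul]
                norm_num
          _ ≤ 1 := by rw [h1]; linarith
    · rintro ⟨hz0, hz1⟩
      obtain ⟨u, hn, hval⟩ := exists_u z hz0 hz1
      exact ⟨u, hn, by rw [integral_split μ _ hμ u]; exact hval⟩
  refine ⟨Set.ext fun z => key z, fun ⟨u, h1, h2⟩ => by simpa using (key 0).1 ⟨u, h1, h2⟩⟩
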